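/- Fix N > 2 and let M_μ be the recursively defined N^μ × N^μ matrices of N-th roots of unity with N^{-μ/2} M_μ unitary. Define M(x) = Σ_{μ=1}^∞ (N^{-3μ/2}/μ²) M_μ applied to consecutive blocks of variables of lengths N, N², N³, …. Then |M(x)| ≤ Σ_{μ=1}^∞ 1/μ² = π²/6 for all x in the closed unit polydisc 𝒮, while the sum of the moduli of the coefficients of M equals Σ_{μ=1}^∞ N^{μ/2}/μ² = ∞. -/

import Mathlib

open Filter Topology

attribute [local instance] Classical.propDecidable

/-- Littlewood's matrices for a fixed `N`: `littleM N 1 = (e^{2πi rs/N})_{r,s=1,…,N}` and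
`littleM N (μ+1)` is the block matrix whose `(r,s)` block is `e^{2πi rs/N} · littleM N μ`;
the index set of `littleM N μ` is `Fin μ → Fin N`. -/
noncomputable def littleM (N : ℕ) : (μ : ℕ) → Matrix (Fin μ → Fin N) (Fin μ → Fin N) ℂ
  | 0 => 1
  | (μ + 1) => fun r s =>
      Complex.exp (2 * (Real.pi : ℂ) * Complex.I *
          ((((r 0 : ℕ) : ℂ) + 1) * (((s 0 : ℕ) : ℂ) + 1)) / (N : ℂ)) *
        littleM N μ (fun k => r k.succ) (fun k => s k.succ)

/-- `blockStartN N μ` is the index in `ℕ` where the `μ`-th block (of length `N^{μ+1}`,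
`μ = 0, 1, 2, …`, corresponding to the paper's blocks of lengths `N, N², N³, …`) starts. -/
def blockStartN (N μ : ℕ) : ℕ := ∑ β ∈ Finset.range μ, N ^ (β + 1)

/-- The coefficients of Littlewood's quadratic form
`M(x) = ∑_μ (N^{-3(μ+1)/2} / (μ+1)²) M_{μ+1}`, applied to consecutive blocks of variables
of lengths `N, N², N³, …`. -/
noncomputable def littleCoef (N : ℕ) (m n : ℕ) : ℂ :=
  if h : ∃ μ, (blockStartN N μ ≤ m ∧ m < blockStartN N (μ + 1)) ∧
      (blockStartN N μ ≤ n ∧ n < blockStartN N (μ + 1)) then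
    ((((N : ℝ) ^ (-(3 * ((h.choose : ℝ) + 1)) / 2) / ((h.choose : ℝ) + 1) ^ 2 : ℝ)) : ℂ) *
      littleM N (h.choose + 1)
        (finFunctionFinEquiv.symm ⟨m - blockStartN N h.choose, by
          obtain ⟨⟨h1, h2⟩, h3, h4⟩ := h.choose_spec
          have e : blockStartN N (h.choose + 1) = blockStartN N h.choose + N ^ (h.choose + 1) :=
            Finset.sum_range_succ _ _
          omega⟩)
        (finFunctionFinEquiv.symm ⟨n - blockStartN N h.choose, by
          obtain ⟨⟨h1, h2⟩, h3, h4⟩ := h.choose_spec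
          have e : blockStartN N (h.choose + 1) = blockStartN N h.choose + N ^ (h.choose + 1) :=
            Finset.sum_range_succ _ _
          omega⟩)
  else 0

lemma littleM_norm (N : ℕ) : ∀ (μ : ℕ) (r s : Fin μ → Fin N), ‖littleM N μ r s‖ = 1
  | 0, r, s => by
      have h : r = s := funext fun i => i.elim0
      subst h
      simp [littleM, Matrix.one_apply_eq]
  | (μ+1), r, s => by
      simp only [littleM]
      rw [norm_mul, littleM_norm N μ _ _, mul_one]
      have h : (2 * (Real.pi : ℂ) * Complex.I *
          ((((r 0 : ℕ) : ℂ) + 1) * (((s 0 : ℕ) : ℂ) + 1)) / (N : ℂ))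
          = ((2 * Real.pi * ((((r 0 : ℕ) : ℝ) + 1) * (((s 0 : ℕ) : ℝ) + 1)) / (N : ℝ) : ℝ) : ℂ) * Complex.I := by
        push_cast; ring
      rw [h, Complex.norm_exp_ofReal_mul_I]

lemma rootSum (N : ℕ) (hN : 0 < N) (a b : Fin N) :
    ∑ r0 : Fin N, Complex.exp (2 * (Real.pi : ℂ) * Complex.I *
        ((((r0 : ℕ) : ℂ) + 1) * (((a : ℕ) : ℂ) + 1)) / (N : ℂ)) *
      (starRingEnd ℂ) (Complex.exp (2 * (Real.pi : ℂ) * Complex.I *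
        ((((r0 : ℕ) : ℂ) + 1) * (((b : ℕ) : ℂ) + 1)) / (N : ℂ)))
    = if a = b then (N : ℂ) else 0 := by
  have hNC : (N : ℂ) ≠ 0 := Nat.cast_ne_zero.2 hN.ne'
  set w : ℂ := 2 * (Real.pi : ℂ) * Complex.I * (((a : ℕ) : ℂ) - ((b : ℕ) : ℂ)) / N with hw
  have key : ∀ r0 : Fin N,
      Complex.exp (2 * (Real.pi : ℂ) * Complex.I *
        ((((r0 : ℕ) : ℂ) + 1) * (((a : ℕ) : ℂ) + 1)) / (N : ℂ)) *
      (starRingEnd ℂ) (Complex.exp (2 * (Real.pi : ℂ) * Complex.I *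
        ((((r0 : ℕ) : ℂ) + 1) * (((b : ℕ) : ℂ) + 1)) / (N : ℂ)))
      = Complex.exp w ^ ((r0 : ℕ) + 1) := by
    intro r0
    rw [← Complex.exp_conj]
    have h2 : (2 * (Real.pi : ℂ) * Complex.I *
        ((((r0 : ℕ) : ℂ) + 1) * (((b : ℕ) : ℂ) + 1)) / (N : ℂ))
        = ((2 * Real.pi * ((((r0 : ℕ) : ℝ) + 1) * (((b : ℕ) : ℝ) + 1)) / (N : ℝ) : ℝ) : ℂ) * Complex.I := by
      push_cast; ring
    rw [h2, map_mul, Complex.conj_ofReal, Complex.conj_I]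
    rw [← Complex.exp_add, ← Complex.exp_nat_mul]
    congr 1
    push_cast
    ring
  rw [Finset.sum_congr rfl fun r0 _ => key r0]
  by_cases hab : a = b
  · subst hab
    have hw0 : w = 0 := by rw [hw]; simp
    simp [hw0, if_pos rfl, Finset.card_univ]
  · rw [if_neg hab]
    have hω1 : Complex.exp w ≠ 1 := by
      intro h1
      rw [Complex.exp_eq_one_iff] at h1
      obtain ⟨n, hn⟩ := h1
      rw [hw] at hn
      have hI : (2 : ℂ) * (Real.pi : ℂ) * Complex.I ≠ 0 := by
        simp [Real.pi_ne_zero, Complex.I_ne_zero]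
      have h2 : (((a : ℕ) : ℂ) - ((b : ℕ) : ℂ)) = n * N := by
        field_simp at hn
        apply mul_left_cancel₀ hI
        linear_combination (2 * (Real.pi : ℂ) * Complex.I) * hn
      have h3 : ((a : ℕ) : ℤ) - ((b : ℕ) : ℤ) = n * N := by exact_mod_cast h2
      have hne : ((a : ℕ) : ℤ) - ((b : ℕ) : ℤ) ≠ 0 := by
        simp only [sub_ne_zero]
        exact_mod_cast fun h => hab (Fin.ext (by exact_mod_cast h))
      have hn0 : n ≠ 0 := by
        rintro rfl; simp at h3; exact hne (by omega)
      have ha' : ((a : ℕ) : ℤ) < N := by exact_mod_cast a.isLt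
      have hb' : ((b : ℕ) : ℤ) < N := by exact_mod_cast b.isLt
      have ha0 : (0 : ℤ) ≤ ((a : ℕ) : ℤ) := by positivity
      have hb0 : (0 : ℤ) ≤ ((b : ℕ) : ℤ) := by positivity
      have habs : |((a : ℕ) : ℤ) - ((b : ℕ) : ℤ)| < N := by
        rw [abs_sub_lt_iff]; omega
      rw [h3] at habs
      have h4 : (N : ℤ) ≤ |n * N| := by
        rw [abs_mul, abs_of_nonneg (by positivity : (0:ℤ) ≤ (N:ℤ))]
        nlinarith [Int.one_le_abs hn0]
      exact absurd habs (not_lt.2 h4)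
    have hωN : Complex.exp w ^ N = 1 := by
      rw [← Complex.exp_nat_mul]
      have hthis : (N : ℂ) * w
          = ((((a : ℕ) : ℤ) - ((b : ℕ) : ℤ) : ℤ) : ℂ) * (2 * (Real.pi : ℂ) * Complex.I) := by
        rw [hw]; push_cast; field_simp
      rw [hthis, Complex.exp_int_mul_two_pi_mul_I]
    have hsum : ∑ r0 : Fin N, Complex.exp w ^ ((r0 : ℕ) + 1)
        = (∑ i ∈ Finset.range N, Complex.exp w ^ i) * Complex.exp w := by
      rw [Finset.sum_mul, ← Fin.sum_univ_eq_sum_range]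
      exact Finset.sum_congr rfl fun i _ => (pow_succ _ _)
    rw [hsum, geom_sum_eq hω1, hωN]
    simp

lemma littleM_ortho (N : ℕ) (hN : 0 < N) : ∀ (μ : ℕ) (s s' : Fin μ → Fin N),
    ∑ r, littleM N μ r s * (starRingEnd ℂ) (littleM N μ r s')
      = if s = s' then ((N : ℂ)) ^ μ else 0
  | 0, s, s' => by
      have he : s = s' := funext fun i => i.elim0
      subst he
      rw [if_pos rfl]
      have key : ∀ r : Fin 0 → Fin N,
          littleM N 0 r s * (starRingEnd ℂ) (littleM N 0 r s) = 1 := by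
        intro r
        have : r = s := funext fun i => i.elim0
        subst this
        simp [littleM, Matrix.one_apply_eq]
      rw [Finset.sum_congr rfl fun r _ => key r]
      simp
  | (μ + 1), s, s' => by
      have IH := littleM_ortho N hN μ (fun k => s k.succ) (fun k => s' k.succ)
      rw [← Equiv.sum_comp (Fin.consEquiv fun _ : Fin (μ + 1) => Fin N)
        (fun r => littleM N (μ+1) r s * (starRingEnd ℂ) (littleM N (μ+1) r s'))]
      rw [Fintype.sum_prod_type]
      have key : ∀ (r0 : Fin N) (r' : Fin μ → Fin N),
          littleM N (μ+1) ((Fin.consEquiv fun _ : Fin (μ + 1) => Fin N) (r0, r')) s *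
            (starRingEnd ℂ) (littleM N (μ+1) ((Fin.consEquiv fun _ : Fin (μ + 1) => Fin N) (r0, r')) s')
          = (Complex.exp (2 * (Real.pi : ℂ) * Complex.I *
              ((((r0 : ℕ) : ℂ) + 1) * (((s 0 : ℕ) : ℂ) + 1)) / (N : ℂ)) *
            (starRingEnd ℂ) (Complex.exp (2 * (Real.pi : ℂ) * Complex.I *
              ((((r0 : ℕ) : ℂ) + 1) * (((s' 0 : ℕ) : ℂ) + 1)) / (N : ℂ)))) *
            (littleM N μ (fun k => r' k) (fun k => s k.succ) *
              (starRingEnd ℂ) (littleM N μ (fun k => r' k) (fun k => s' k.succ))) := by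
        intro r0 r'
        simp only [littleM, Fin.consEquiv_apply, Fin.cons_zero, Fin.cons_succ, map_mul]
        ring
      rw [Finset.sum_congr rfl fun r0 _ => Finset.sum_congr rfl fun r' _ => key r0 r']
      rw [← Finset.sum_mul_sum]
      rw [rootSum N hN (s 0) (s' 0)]
      have hIH' : ∑ r' : Fin μ → Fin N, littleM N μ (fun k => r' k) (fun k => s k.succ) *
          (starRingEnd ℂ) (littleM N μ (fun k => r' k) (fun k => s' k.succ))
          = if (fun k => s k.succ) = (fun k : Fin μ => s' k.succ) then ((N : ℂ)) ^ μ else 0 := IH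
      rw [hIH']
      have hiff : s = s' ↔ (s 0 = s' 0 ∧ (fun k : Fin μ => s k.succ) = fun k => s' k.succ) := by
        constructor
        · rintro rfl; exact ⟨rfl, rfl⟩
        · rintro ⟨h1, h2⟩
          funext i
          refine Fin.cases h1 (fun k => ?_) i
          exact congrFun h2 k
      by_cases h0 : s 0 = s' 0 <;> by_cases ht : (fun k : Fin μ => s k.succ) = fun k => s' k.succ
      · rw [if_pos h0, if_pos ht, if_pos (hiff.2 ⟨h0, ht⟩)]
        ring
      · rw [if_pos h0, if_neg ht, if_neg (fun h => ht (hiff.1 h).2)]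
        ring
      · rw [if_neg h0, if_pos ht, if_neg (fun h => h0 (hiff.1 h).1)]
        ring
      · rw [if_neg h0, if_neg ht, if_neg (fun h => h0 (hiff.1 h).1)]
        ring

lemma quad_bound (N μ : ℕ) (hN : 0 < N) (x y : (Fin μ → Fin N) → ℂ)
    (hx : ∀ r, ‖x r‖ ≤ 1) (hy : ∀ s, ‖y s‖ ≤ 1) :
    ‖∑ r, ∑ s, littleM N μ r s * x r * y s‖ ≤ ((N : ℝ) ^ μ) * Real.sqrt ((N : ℝ) ^ μ) := by
  set f : (Fin μ → Fin N) → ℂ := fun r => ∑ s, littleM N μ r s * y s with hf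
  have hcard : (Fintype.card (Fin μ → Fin N) : ℝ) = (N : ℝ) ^ μ := by
    simp [Fintype.card_fun]
  have step0 : ∑ r, ∑ s, littleM N μ r s * x r * y s = ∑ r, x r * f r := by
    refine Finset.sum_congr rfl fun r _ => ?_
    rw [hf, Finset.mul_sum]
    exact Finset.sum_congr rfl fun s _ => by ring
  have key : ∑ r, f r * (starRingEnd ℂ) (f r)
      = (N : ℂ) ^ μ * ∑ s, y s * (starRingEnd ℂ) (y s) := by
    have e1 : ∀ r : Fin μ → Fin N, f r * (starRingEnd ℂ) (f r)
        = ∑ s, ∑ s', (littleM N μ r s * (starRingEnd ℂ) (littleM N μ r s')) *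
          (y s * (starRingEnd ℂ) (y s')) := by
      intro r
      rw [hf, map_sum, Finset.sum_mul_sum]
      exact Finset.sum_congr rfl fun s _ => Finset.sum_congr rfl fun s' _ => by
        rw [map_mul]; ring
    rw [Finset.sum_congr rfl fun r _ => e1 r]
    rw [Finset.sum_comm]
    have e2 : ∀ s : Fin μ → Fin N,
        ∑ r, ∑ s', (littleM N μ r s * (starRingEnd ℂ) (littleM N μ r s')) *
          (y s * (starRingEnd ℂ) (y s'))
        = ∑ s', (∑ r, littleM N μ r s * (starRingEnd ℂ) (littleM N μ r s')) *
          (y s * (starRingEnd ℂ) (y s')) := by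
      intro s
      rw [Finset.sum_comm]
      exact Finset.sum_congr rfl fun s' _ => by rw [Finset.sum_mul]
    rw [Finset.sum_congr rfl fun s _ => e2 s]
    rw [Finset.sum_congr rfl fun s _ => Finset.sum_congr rfl fun s' _ => by
      rw [littleM_ortho N hN μ s s']]
    rw [Finset.mul_sum]
    refine Finset.sum_congr rfl fun s _ => ?_
    simp [Finset.sum_ite_eq]
  have hsq : ∀ z : ℂ, z * (starRingEnd ℂ) z = ((‖z‖ ^ 2 : ℝ) : ℂ) := fun z => by
    rw [Complex.mul_conj]
    norm_cast
    rw [Complex.sq_norm]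
  have key2 : ∑ r, ‖f r‖ ^ 2 = (N : ℝ) ^ μ * ∑ s, ‖y s‖ ^ 2 := by
    have h1 : ((∑ r, ‖f r‖ ^ 2 : ℝ) : ℂ) = ∑ r, f r * (starRingEnd ℂ) (f r) := by
      push_cast
      exact (Finset.sum_congr rfl fun r _ => by rw [hsq (f r)]; push_cast; ring).symm
    have h2 : (((N : ℝ) ^ μ * ∑ s, ‖y s‖ ^ 2 : ℝ) : ℂ)
        = (N : ℂ) ^ μ * ∑ s, y s * (starRingEnd ℂ) (y s) := by
      push_cast
      congr 1
      exact (Finset.sum_congr rfl fun s _ => by rw [hsq (y s)]; push_cast; ring).symm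
    have := h1.trans (key.trans h2.symm)
    exact_mod_cast this
  have hT : (0:ℝ) ≤ (N : ℝ) ^ μ := by positivity
  have hyb : ∑ s, ‖y s‖ ^ 2 ≤ (N : ℝ) ^ μ := by
    calc ∑ s, ‖y s‖ ^ 2 ≤ ∑ _s : Fin μ → Fin N, (1:ℝ) :=
          Finset.sum_le_sum fun s _ => by nlinarith [hy s, norm_nonneg (y s)]
      _ = (N : ℝ) ^ μ := by rw [Finset.sum_const, nsmul_eq_mul, mul_one, Finset.card_univ, hcard]
  have hf2 : ∑ r, ‖f r‖ ^ 2 ≤ (N : ℝ) ^ μ * (N : ℝ) ^ μ := by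
    rw [key2]; exact mul_le_mul_of_nonneg_left hyb hT
  have hCS : (∑ r, ‖f r‖) ^ 2 ≤ (N : ℝ) ^ μ * ((N : ℝ) ^ μ * (N : ℝ) ^ μ) := by
    have h := Finset.sum_mul_sq_le_sq_mul_sq Finset.univ (fun _ : Fin μ → Fin N => (1:ℝ))
      (fun r => ‖f r‖)
    simp only [one_mul, one_pow] at h
    calc (∑ r, ‖f r‖) ^ 2 ≤ (∑ _r : Fin μ → Fin N, (1:ℝ)) * ∑ r, ‖f r‖ ^ 2 := h
      _ = (N : ℝ) ^ μ * ∑ r, ‖f r‖ ^ 2 := by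
          rw [Finset.sum_const, nsmul_eq_mul, mul_one, Finset.card_univ, hcard]
      _ ≤ (N : ℝ) ^ μ * ((N : ℝ) ^ μ * (N : ℝ) ^ μ) := mul_le_mul_of_nonneg_left hf2 hT
  have hfinal : ∑ r, ‖f r‖ ≤ (N : ℝ) ^ μ * Real.sqrt ((N : ℝ) ^ μ) := by
    have hb : (0:ℝ) ≤ (N : ℝ) ^ μ * Real.sqrt ((N : ℝ) ^ μ) := by positivity
    have hsq2 : ((N : ℝ) ^ μ * Real.sqrt ((N : ℝ) ^ μ)) ^ 2
        = (N : ℝ) ^ μ * ((N : ℝ) ^ μ * (N : ℝ) ^ μ) := by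
      rw [mul_pow, Real.sq_sqrt hT]; ring
    have h := Real.sqrt_le_sqrt (hCS.trans_eq hsq2.symm)
    rwa [Real.sqrt_sq (Finset.sum_nonneg fun r _ => norm_nonneg (f r)),
      Real.sqrt_sq hb] at h
  rw [step0]
  calc ‖∑ r, x r * f r‖ ≤ ∑ r, ‖x r * f r‖ := norm_sum_le _ _
    _ ≤ ∑ r, ‖f r‖ := Finset.sum_le_sum fun r _ => by
        rw [norm_mul]; exact mul_le_of_le_one_left (norm_nonneg _) (hx r)
    _ ≤ _ := hfinal

lemma blockStartN_succ (N μ : ℕ) :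
    blockStartN N (μ + 1) = blockStartN N μ + N ^ (μ + 1) := Finset.sum_range_succ _ _

lemma blockStartN_mono (N : ℕ) (hN : 0 < N) : StrictMono (blockStartN N) :=
  strictMono_nat_of_lt_succ fun μ => by
    rw [blockStartN_succ]
    have : 0 < N ^ (μ + 1) := Nat.pow_pos hN
    omega

lemma block_mem_lt {N : ℕ} (hN : 0 < N) {κ σ m : ℕ}
    (h1 : blockStartN N κ ≤ m) (h2 : m < blockStartN N σ) : κ < σ := by
  by_contra h
  push_neg at h
  have := (blockStartN_mono N hN).monotone h
  omega

lemma block_unique {N : ℕ} (hN : 0 < N) {μ ν m : ℕ}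
    (h1 : blockStartN N μ ≤ m) (h2 : m < blockStartN N (μ + 1))
    (h3 : blockStartN N ν ≤ m) (h4 : m < blockStartN N (ν + 1)) : μ = ν := by
  have := block_mem_lt hN h1 h4
  have := block_mem_lt hN h3 h2
  omega

lemma littleCoef_eq_zero {N : ℕ} (hN : 0 < N) {m n σ : ℕ}
    (h : m < blockStartN N σ) (h' : blockStartN N σ ≤ n) : littleCoef N m n = 0 := by
  rw [littleCoef, dif_neg]
  rintro ⟨κ, ⟨hm1, hm2⟩, hn1, hn2⟩
  have hk : κ < σ := block_mem_lt hN hm1 h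
  have : blockStartN N (κ + 1) ≤ blockStartN N σ := (blockStartN_mono N hN).monotone hk
  omega

lemma littleCoef_eq_zero' {N : ℕ} (hN : 0 < N) {m n σ : ℕ}
    (h : n < blockStartN N σ) (h' : blockStartN N σ ≤ m) : littleCoef N m n = 0 := by
  rw [littleCoef, dif_neg]
  rintro ⟨κ, ⟨hm1, hm2⟩, hn1, hn2⟩
  have hk : κ < σ := block_mem_lt hN hn1 h
  have : blockStartN N (κ + 1) ≤ blockStartN N σ := (blockStartN_mono N hN).monotone hk
  omega

lemma littleCoef_eq {N : ℕ} (hN : 0 < N) {μ m n : ℕ}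
    (hm1 : blockStartN N μ ≤ m) (hm2 : m < blockStartN N (μ + 1))
    (hn1 : blockStartN N μ ≤ n) (hn2 : n < blockStartN N (μ + 1))
    (pm : m - blockStartN N μ < N ^ (μ + 1)) (pn : n - blockStartN N μ < N ^ (μ + 1)) :
    littleCoef N m n = ((((N : ℝ) ^ (-(3 * ((μ : ℝ) + 1)) / 2) / ((μ : ℝ) + 1) ^ 2 : ℝ)) : ℂ) *
      littleM N (μ + 1) (finFunctionFinEquiv.symm ⟨m - blockStartN N μ, pm⟩)
        (finFunctionFinEquiv.symm ⟨n - blockStartN N μ, pn⟩) := by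
  have hex : ∃ κ, (blockStartN N κ ≤ m ∧ m < blockStartN N (κ + 1)) ∧
      (blockStartN N κ ≤ n ∧ n < blockStartN N (κ + 1)) := ⟨μ, ⟨hm1, hm2⟩, hn1, hn2⟩
  rw [littleCoef, dif_pos hex]
  have hu : hex.choose = μ :=
    block_unique hN hex.choose_spec.1.1 hex.choose_spec.1.2 hm1 hm2
  have gen : ∀ (κ : ℕ), κ = μ → ∀ (p1 : m - blockStartN N κ < N ^ (κ + 1))
      (p2 : n - blockStartN N κ < N ^ (κ + 1)),
      ((((N : ℝ) ^ (-(3 * ((κ : ℝ) + 1)) / 2) / ((κ : ℝ) + 1) ^ 2 : ℝ)) : ℂ) *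
      littleM N (κ + 1) (finFunctionFinEquiv.symm ⟨m - blockStartN N κ, p1⟩)
        (finFunctionFinEquiv.symm ⟨n - blockStartN N κ, p2⟩)
      = ((((N : ℝ) ^ (-(3 * ((μ : ℝ) + 1)) / 2) / ((μ : ℝ) + 1) ^ 2 : ℝ)) : ℂ) *
      littleM N (μ + 1) (finFunctionFinEquiv.symm ⟨m - blockStartN N μ, pm⟩)
        (finFunctionFinEquiv.symm ⟨n - blockStartN N μ, pn⟩) := by
    rintro κ rfl p1 p2
    rfl
  exact gen hex.choose hu _ _

noncomputable def blockSum (N : ℕ) (x : ℕ → ℂ) (μ : ℕ) : ℂ :=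
  ∑ m ∈ Finset.Ico (blockStartN N μ) (blockStartN N (μ + 1)),
    ∑ n ∈ Finset.Ico (blockStartN N μ) (blockStartN N (μ + 1)),
      littleCoef N m n * x m * x n

lemma blockSum_congr {N : ℕ} {x y : ℕ → ℂ} {μ : ℕ}
    (h : ∀ j, blockStartN N μ ≤ j → j < blockStartN N (μ + 1) → x j = y j) :
    blockSum N x μ = blockSum N y μ := by
  unfold blockSum
  refine Finset.sum_congr rfl fun m hm => Finset.sum_congr rfl fun n hn => ?_
  rw [Finset.mem_Ico] at hm hn
  rw [h m hm.1 hm.2, h n hn.1 hn.2]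

lemma blockSum_eq (N : ℕ) (hN : 0 < N) (x : ℕ → ℂ) (μ : ℕ) :
    blockSum N x μ = ((((N : ℝ) ^ (-(3 * ((μ : ℝ) + 1)) / 2) / ((μ : ℝ) + 1) ^ 2 : ℝ)) : ℂ) *
      ∑ r : Fin (μ + 1) → Fin N, ∑ s : Fin (μ + 1) → Fin N, littleM N (μ + 1) r s *
        x (blockStartN N μ + (finFunctionFinEquiv r : ℕ)) *
        x (blockStartN N μ + (finFunctionFinEquiv s : ℕ)) := by
  have hbs : blockStartN N (μ + 1) = blockStartN N μ + N ^ (μ + 1) := blockStartN_succ N μ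
  set b := blockStartN N μ with hb
  set L := N ^ (μ + 1) with hL
  set c : ℂ := ((((N : ℝ) ^ (-(3 * ((μ : ℝ) + 1)) / 2) / ((μ : ℝ) + 1) ^ 2 : ℝ)) : ℂ) with hc
  set e := (finFunctionFinEquiv : (Fin (μ + 1) → Fin N) ≃ Fin L) with he
  unfold blockSum
  rw [← Finset.sum_product']
  rw [show (∑ r : Fin (μ + 1) → Fin N, ∑ s : Fin (μ + 1) → Fin N, littleM N (μ + 1) r s *
        x (b + (e r : ℕ)) * x (b + (e s : ℕ)))
      = ∑ p ∈ (Finset.univ ×ˢ Finset.univ :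
          Finset ((Fin (μ + 1) → Fin N) × (Fin (μ + 1) → Fin N))),
          littleM N (μ + 1) p.1 p.2 * x (b + (e p.1 : ℕ)) * x (b + (e p.2 : ℕ))
    from (Finset.sum_product' _ _ _).symm]
  rw [Finset.mul_sum]
  refine Finset.sum_bij' (fun p hp => (e.symm ⟨p.1 - b, ?_⟩, e.symm ⟨p.2 - b, ?_⟩))
    (fun q _ => (b + (e q.1 : ℕ), b + (e q.2 : ℕ))) ?_ ?_ ?_ ?_ ?_
  · rw [Finset.mem_product, Finset.mem_Ico, Finset.mem_Ico, hbs] at hp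
    omega
  · rw [Finset.mem_product, Finset.mem_Ico, Finset.mem_Ico, hbs] at hp
    omega
  · intro p hp
    exact Finset.mem_product.2 ⟨Finset.mem_univ _, Finset.mem_univ _⟩
  · intro q hq
    rw [Finset.mem_product, Finset.mem_Ico, Finset.mem_Ico, hbs]
    have h1 := (e q.1).isLt
    have h2 := (e q.2).isLt
    omega
  · intro p hp
    dsimp only
    rw [Finset.mem_product, Finset.mem_Ico, Finset.mem_Ico] at hp
    simp only [Equiv.apply_symm_apply]
    have h1 := hp.1.1
    have h2 := hp.2.1
    ext <;> simp <;> omega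
  · intro q hq
    dsimp only
    simp only [Nat.add_sub_cancel_left]
    ext <;> simp
  · intro p hp
    dsimp only
    rw [Finset.mem_product, Finset.mem_Ico, Finset.mem_Ico] at hp
    have pm : p.1 - b < N ^ (μ + 1) := by
      have := hp.1.2; rw [hbs] at this; omega
    have pn : p.2 - b < N ^ (μ + 1) := by
      have := hp.2.2; rw [hbs] at this; omega
    rw [littleCoef_eq hN hp.1.1 hp.1.2 hp.2.1 hp.2.2 pm pn]
    simp only [Equiv.apply_symm_apply]
    have hm : b + (p.1 - b) = p.1 := by have := hp.1.1; omega
    have hn : b + (p.2 - b) = p.2 := by have := hp.2.1; omega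
    rw [hm, hn]
    ring

lemma coefR_nonneg (N μ : ℕ) : (0:ℝ) ≤ (N : ℝ) ^ (-(3 * ((μ : ℝ) + 1)) / 2) / ((μ : ℝ) + 1) ^ 2 := by
  have h1 : (0:ℝ) ≤ (N : ℝ) ^ (-(3 * ((μ : ℝ) + 1)) / 2) := Real.rpow_nonneg (by positivity) _
  positivity

lemma pow_sqrt_eq (N μ : ℕ) (hN : 0 < N) :
    ((N : ℝ) ^ (μ + 1)) * Real.sqrt ((N : ℝ) ^ (μ + 1))
      = (N : ℝ) ^ ((3 * ((μ : ℝ) + 1)) / 2) := by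
  have hNpos : (0:ℝ) < N := by exact_mod_cast hN
  rw [← Real.rpow_natCast (N : ℝ) (μ + 1), Real.sqrt_eq_rpow, ← Real.rpow_mul hNpos.le,
    ← Real.rpow_add hNpos]
  congr 1
  push_cast
  ring

lemma blockSum_bound (N : ℕ) (hN : 0 < N) (x : ℕ → ℂ) (hx : ∀ j, ‖x j‖ ≤ 1) (μ : ℕ) :
    ‖blockSum N x μ‖ ≤ 1 / ((μ : ℝ) + 1) ^ 2 := by
  have hNpos : (0:ℝ) < N := by exact_mod_cast hN
  rw [blockSum_eq N hN x μ, norm_mul]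
  have h1 : ‖(((((N : ℝ) ^ (-(3 * ((μ : ℝ) + 1)) / 2) / ((μ : ℝ) + 1) ^ 2 : ℝ)) : ℂ))‖
      = (N : ℝ) ^ (-(3 * ((μ : ℝ) + 1)) / 2) / ((μ : ℝ) + 1) ^ 2 := by
    rw [Complex.norm_real, Real.norm_eq_abs, abs_of_nonneg (coefR_nonneg N μ)]
  rw [h1]
  have h2 := quad_bound N (μ + 1) hN
    (fun r => x (blockStartN N μ + (finFunctionFinEquiv r : ℕ)))
    (fun s => x (blockStartN N μ + (finFunctionFinEquiv s : ℕ)))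
    (fun r => hx _) (fun s => hx _)
  calc (N : ℝ) ^ (-(3 * ((μ : ℝ) + 1)) / 2) / ((μ : ℝ) + 1) ^ 2 *
        ‖∑ r : Fin (μ + 1) → Fin N, ∑ s : Fin (μ + 1) → Fin N, littleM N (μ + 1) r s *
          x (blockStartN N μ + (finFunctionFinEquiv r : ℕ)) *
          x (blockStartN N μ + (finFunctionFinEquiv s : ℕ))‖
      ≤ (N : ℝ) ^ (-(3 * ((μ : ℝ) + 1)) / 2) / ((μ : ℝ) + 1) ^ 2 *
        (((N : ℝ) ^ (μ + 1)) * Real.sqrt ((N : ℝ) ^ (μ + 1))) :=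
        mul_le_mul_of_nonneg_left h2 (coefR_nonneg N μ)
    _ = 1 / ((μ : ℝ) + 1) ^ 2 := by
        rw [pow_sqrt_eq N μ hN, div_mul_eq_mul_div, ← Real.rpow_add hNpos,
          show (-(3 * ((μ:ℝ) + 1)) / 2 + 3 * ((μ:ℝ) + 1) / 2) = 0 by ring, Real.rpow_zero]

lemma sum_range_block (N : ℕ) (hN : 0 < N) (x : ℕ → ℂ) :
    ∀ σ : ℕ, ∑ m ∈ Finset.range (blockStartN N σ), ∑ n ∈ Finset.range (blockStartN N σ),
        littleCoef N m n * x m * x n = ∑ μ ∈ Finset.range σ, blockSum N x μ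
  | 0 => by simp [blockStartN]
  | (σ + 1) => by
      have IH := sum_range_block N hN x σ
      have hsplit : Finset.range (blockStartN N (σ + 1))
          = Finset.range (blockStartN N σ) ∪
            Finset.Ico (blockStartN N σ) (blockStartN N (σ + 1)) := by
        rw [Finset.range_eq_Ico, Finset.range_eq_Ico]
        exact (Finset.Ico_union_Ico_eq_Ico (Nat.zero_le _)
          ((blockStartN_mono N hN).monotone (Nat.le_add_right σ 1))).symm
      have hdisj : Disjoint (Finset.range (blockStartN N σ))
          (Finset.Ico (blockStartN N σ) (blockStartN N (σ + 1))) := by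
        rw [Finset.range_eq_Ico]
        exact Finset.Ico_disjoint_Ico_consecutive 0 _ _
      rw [hsplit]
      simp only [Finset.sum_union hdisj]
      rw [Finset.sum_add_distrib, Finset.sum_add_distrib]
      have hAB : ∑ m ∈ Finset.range (blockStartN N σ),
          ∑ n ∈ Finset.Ico (blockStartN N σ) (blockStartN N (σ + 1)),
            littleCoef N m n * x m * x n = 0 := by
        refine Finset.sum_eq_zero fun m hm => Finset.sum_eq_zero fun n hn => ?_
        rw [Finset.mem_range] at hm
        rw [Finset.mem_Ico] at hn
        rw [littleCoef_eq_zero hN hm hn.1]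
        ring
      have hBA : ∑ m ∈ Finset.Ico (blockStartN N σ) (blockStartN N (σ + 1)),
          ∑ n ∈ Finset.range (blockStartN N σ),
            littleCoef N m n * x m * x n = 0 := by
        refine Finset.sum_eq_zero fun m hm => Finset.sum_eq_zero fun n hn => ?_
        rw [Finset.mem_range] at hn
        rw [Finset.mem_Ico] at hm
        rw [littleCoef_eq_zero' hN hn hm.1]
        ring
      rw [hAB, hBA, IH, Finset.sum_range_succ]
      have : ∑ m ∈ Finset.Ico (blockStartN N σ) (blockStartN N (σ + 1)),
          ∑ n ∈ Finset.Ico (blockStartN N σ) (blockStartN N (σ + 1)),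
            littleCoef N m n * x m * x n = blockSum N x σ := rfl
      rw [this]
      ring

lemma sum_range_trunc (N : ℕ) (x y : ℕ → ℂ) (M L : ℕ) (hML : M ≤ L)
    (hy1 : ∀ j, j < M → y j = x j) (hy2 : ∀ j, M ≤ j → y j = 0) :
    ∑ m ∈ Finset.range M, ∑ n ∈ Finset.range M, littleCoef N m n * x m * x n
      = ∑ m ∈ Finset.range L, ∑ n ∈ Finset.range L, littleCoef N m n * y m * y n := by
  have step1 : ∀ m, ∑ n ∈ Finset.range M, littleCoef N m n * y m * y n
      = ∑ n ∈ Finset.range L, littleCoef N m n * y m * y n := fun m =>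
    Finset.sum_subset (Finset.range_subset_range.2 hML) (fun n _ hn => by
      rw [Finset.mem_range, not_lt] at hn
      rw [hy2 n hn, mul_zero])
  calc ∑ m ∈ Finset.range M, ∑ n ∈ Finset.range M, littleCoef N m n * x m * x n
      = ∑ m ∈ Finset.range M, ∑ n ∈ Finset.range M, littleCoef N m n * y m * y n := by
        refine Finset.sum_congr rfl fun m hm => Finset.sum_congr rfl fun n hn => ?_
        rw [Finset.mem_range] at hm hn
        rw [hy1 m hm, hy1 n hn]
    _ = ∑ m ∈ Finset.range M, ∑ n ∈ Finset.range L, littleCoef N m n * y m * y n :=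
        Finset.sum_congr rfl fun m _ => step1 m
    _ = ∑ m ∈ Finset.range L, ∑ n ∈ Finset.range L, littleCoef N m n * y m * y n := by
        refine Finset.sum_subset (Finset.range_subset_range.2 hML) (fun m _ hm => ?_)
        rw [Finset.mem_range, not_lt] at hm
        exact Finset.sum_eq_zero fun n _ => by rw [hy2 m hm]; ring

/-- For `N > 2`, Littlewood's quadratic form `M(x)` is defined on the closed
unit polydisc `𝒮` (its square partial sums converge there) and satisfies
`|M(x)| ≤ ∑_{μ≥1} 1/μ² = π²/6` on `𝒮`, while the sum of the moduli of its coefficients,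
`∑_{μ≥1} N^{μ/2}/μ²`, diverges. -/
theorem statement18 (N : ℕ) (hN : 2 < N) :
    (∃ S : (ℕ → ℂ) → ℂ, ∀ x : ℕ → ℂ, (∀ j, ‖x j‖ ≤ 1) →
      Filter.Tendsto (fun M => ∑ m ∈ Finset.range M, ∑ n ∈ Finset.range M,
          littleCoef N m n * x m * x n) Filter.atTop (𝓝 (S x)) ∧
        ‖S x‖ ≤ Real.pi ^ 2 / 6) ∧
    ¬ Summable (fun mn : ℕ × ℕ => ‖littleCoef N mn.1 mn.2‖) := by
  have hN0 : 0 < N := by omega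
  set g : ℕ → ℝ := fun μ => 1 / ((μ : ℝ) + 1) ^ 2 with hgdef
  have hg : Summable g := by
    have h1 : Summable (fun n : ℕ => 1 / (n : ℝ) ^ 2) :=
      Real.summable_one_div_nat_pow.2 one_lt_two
    have h2 := (summable_nat_add_iff (f := fun n : ℕ => 1 / (n : ℝ) ^ 2) 1).2 h1
    refine h2.congr fun n => ?_
    push_cast
    rfl
  have hBasel : HasSum g (Real.pi ^ 2 / 6) := by
    have h1 := (hasSum_nat_add_iff' (f := fun n : ℕ => 1 / (n : ℝ) ^ 2) 1).2 hasSum_zeta_two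
    norm_num at h1
    simpa [hgdef, one_div] using h1
  constructor
  · refine ⟨fun x => ∑' μ, blockSum N x μ, fun x hx => ?_⟩
    have hB : ∀ μ, ‖blockSum N x μ‖ ≤ g μ := blockSum_bound N hN0 x hx
    have hbs : Summable (fun μ => blockSum N x μ) := Summable.of_norm_bounded hg hB
    constructor
    · rw [Metric.tendsto_atTop]
      intro ε hε
      obtain ⟨K, hK⟩ : ∃ K, ∑' k, g (k + K) < ε / 3 :=
        ((tendsto_sum_nat_add g).eventually_lt_const (by positivity)).exists
      refine ⟨blockStartN N K, fun M hM => ?_⟩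
      have hKM : K ≤ M := le_trans (blockStartN_mono N hN0).le_apply hM
      set y : ℕ → ℂ := fun j => if j < M then x j else 0 with hy
      have hyb : ∀ j, ‖y j‖ ≤ 1 := fun j => by
        rw [hy]; dsimp only
        split_ifs
        · exact hx j
        · simp
      have hFM : (∑ m ∈ Finset.range M, ∑ n ∈ Finset.range M, littleCoef N m n * x m * x n)
          = ∑ μ ∈ Finset.range M, blockSum N y μ := by
        rw [sum_range_trunc N x y M (blockStartN N M) (blockStartN_mono N hN0).le_apply
          (fun j hj => if_pos hj) (fun j hj => if_neg (not_lt.2 hj))]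
        exact sum_range_block N hN0 y M
      rw [dist_eq_norm, hFM,
        show (fun x : ℕ → ℂ => ∑' μ, blockSum N x μ) x = ∑' μ, blockSum N x μ from rfl]
      have hS : ∑' μ, blockSum N x μ
          = ∑ μ ∈ Finset.range M, blockSum N x μ + ∑' μ, blockSum N x (μ + M) :=
        (Summable.sum_add_tsum_nat_add M hbs).symm
      rw [hS]
      have hdiff : ∑ μ ∈ Finset.range M, blockSum N y μ
            - ∑ μ ∈ Finset.range M, blockSum N x μ
          = ∑ μ ∈ Finset.Ico K M, (blockSum N y μ - blockSum N x μ) := by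
        rw [← Finset.sum_sub_distrib, Finset.range_eq_Ico,
          ← Finset.sum_Ico_consecutive _ (Nat.zero_le K) hKM]
        have hz : ∑ μ ∈ Finset.Ico 0 K, (blockSum N y μ - blockSum N x μ) = 0 := by
          refine Finset.sum_eq_zero fun μ hμ => ?_
          rw [Finset.mem_Ico] at hμ
          have hble : blockStartN N (μ + 1) ≤ M :=
            le_trans ((blockStartN_mono N hN0).monotone (by omega : μ + 1 ≤ K)) hM
          have : blockSum N y μ = blockSum N x μ := by
            refine blockSum_congr fun j hj1 hj2 => ?_
            rw [hy]; dsimp only; rw [if_pos (lt_of_lt_of_le hj2 hble)]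
          rw [this, sub_self]
        rw [hz, zero_add]
      have htail1 : ‖∑' μ, blockSum N x (μ + M)‖ ≤ ∑' μ, g (μ + M) :=
        tsum_of_norm_bounded ((summable_nat_add_iff M).2 hg).hasSum fun i => hB (i + M)
      have htail2 : ∑' μ, g (μ + M) ≤ ∑' μ, g (μ + K) := by
        have hcong : ∑' μ, g (μ + M) = ∑' i, (fun j => g (j + K)) (i + (M - K)) :=
          tsum_congr fun i => by congr 1; omega
        rw [hcong]
        have hsK : Summable (fun j => g (j + K)) := (summable_nat_add_iff K).2 hg
        have := Summable.sum_add_tsum_nat_add (f := fun j => g (j + K)) (M - K) hsK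
        have hnn : 0 ≤ ∑ i ∈ Finset.range (M - K), g (i + K) :=
          Finset.sum_nonneg fun i _ => by positivity
        linarith
      have hmid : ‖∑ μ ∈ Finset.Ico K M, (blockSum N y μ - blockSum N x μ)‖
          ≤ 2 * ∑' k, g (k + K) := by
        calc ‖∑ μ ∈ Finset.Ico K M, (blockSum N y μ - blockSum N x μ)‖
            ≤ ∑ μ ∈ Finset.Ico K M, ‖blockSum N y μ - blockSum N x μ‖ := norm_sum_le _ _
          _ ≤ ∑ μ ∈ Finset.Ico K M, 2 * g μ := by
              refine Finset.sum_le_sum fun μ _ => ?_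
              have := norm_sub_le (blockSum N y μ) (blockSum N x μ)
              have h1 := blockSum_bound N hN0 y hyb μ
              have h2 := hB μ
              calc ‖blockSum N y μ - blockSum N x μ‖
                  ≤ ‖blockSum N y μ‖ + ‖blockSum N x μ‖ := norm_sub_le _ _
                _ ≤ 2 * g μ := by rw [hgdef]; dsimp only; linarith
          _ = 2 * ∑ μ ∈ Finset.Ico K M, g μ := by rw [Finset.mul_sum]
          _ ≤ 2 * ∑' k, g (k + K) := by
              have : ∑ μ ∈ Finset.Ico K M, g μ ≤ ∑' k, g (k + K) := by
                rw [Finset.sum_Ico_eq_sum_range]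
                have hc : ∀ i, g (K + i) = g (i + K) := fun i => by rw [add_comm]
                rw [Finset.sum_congr rfl fun i _ => hc i]
                exact Summable.sum_le_tsum _ (fun i _ => by positivity)
                  ((summable_nat_add_iff K).2 hg)
              linarith
      calc ‖∑ μ ∈ Finset.range M, blockSum N y μ
            - (∑ μ ∈ Finset.range M, blockSum N x μ + ∑' μ, blockSum N x (μ + M))‖
          = ‖(∑ μ ∈ Finset.Ico K M, (blockSum N y μ - blockSum N x μ))
              - ∑' μ, blockSum N x (μ + M)‖ := by rw [← hdiff]; congr 1; ring
        _ ≤ ‖∑ μ ∈ Finset.Ico K M, (blockSum N y μ - blockSum N x μ)‖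
            + ‖∑' μ, blockSum N x (μ + M)‖ := norm_sub_le _ _
        _ ≤ 2 * ∑' k, g (k + K) + ∑' μ, g (μ + K) := by
            have := htail1.trans htail2
            linarith
        _ < ε := by linarith
    · exact tsum_of_norm_bounded hBasel hB
  · intro hsum
    set C := ∑' p : ℕ × ℕ, ‖littleCoef N p.1 p.2‖ with hC
    have hCnn : 0 ≤ C := tsum_nonneg fun p => norm_nonneg _
    set r : ℝ := Real.sqrt N with hr
    have hNR : (1 : ℝ) < N := by exact_mod_cast (by omega : 1 < N)
    have hr1 : 1 < r := by
      rw [hr, show (1:ℝ) = Real.sqrt 1 by rw [Real.sqrt_one]]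
      exact Real.sqrt_lt_sqrt (by norm_num) hNR
    have hrpos : 0 < r := lt_trans one_pos hr1
    -- block sums of coefficients
    have hQ : ∀ μ : ℕ, r ^ (μ + 1) / ((μ : ℝ) + 1) ^ 2 ≤ C := by
      intro μ
      have hle : ∑ p ∈ (Finset.Ico (blockStartN N μ) (blockStartN N (μ + 1)) ×ˢ
            Finset.Ico (blockStartN N μ) (blockStartN N (μ + 1))),
            ‖littleCoef N p.1 p.2‖ ≤ C :=
        Summable.sum_le_tsum _ (fun p _ => norm_nonneg _) hsum
      have hval : ∑ p ∈ (Finset.Ico (blockStartN N μ) (blockStartN N (μ + 1)) ×ˢ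
            Finset.Ico (blockStartN N μ) (blockStartN N (μ + 1))),
            ‖littleCoef N p.1 p.2‖ = r ^ (μ + 1) / ((μ : ℝ) + 1) ^ 2 := by
        have hterm : ∀ m ∈ Finset.Ico (blockStartN N μ) (blockStartN N (μ + 1)),
            ∀ n ∈ Finset.Ico (blockStartN N μ) (blockStartN N (μ + 1)),
            ‖littleCoef N m n‖
              = (N : ℝ) ^ (-(3 * ((μ : ℝ) + 1)) / 2) / ((μ : ℝ) + 1) ^ 2 := by
          intro m hm n hn
          rw [Finset.mem_Ico] at hm hn
          have hbs := blockStartN_succ N μ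
          rw [littleCoef_eq hN0 hm.1 hm.2 hn.1 hn.2 (by omega) (by omega)]
          rw [norm_mul, Complex.norm_real, Real.norm_eq_abs,
            abs_of_nonneg (coefR_nonneg N μ), littleM_norm, mul_one]
        rw [Finset.sum_product]
        rw [Finset.sum_congr rfl fun m hm => Finset.sum_congr rfl fun n hn => hterm m hm n hn]
        simp only [Finset.sum_const, nsmul_eq_mul, Nat.card_Ico]
        have hcard : (blockStartN N (μ + 1) - blockStartN N μ : ℕ) = N ^ (μ + 1) := by
          rw [blockStartN_succ]; omega
        rw [hcard]
        -- now: (N^(μ+1):ℝ) * ((N^(μ+1):ℝ) * coef) = r^(μ+1)/(μ+1)^2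
        have hNpos : (0:ℝ) < N := by exact_mod_cast hN0
        have hpow : ((N ^ (μ + 1) : ℕ) : ℝ) = (N : ℝ) ^ ((μ + 1 : ℕ) : ℝ) := by
          rw [Real.rpow_natCast]
          push_cast
          ring
        rw [hpow]
        rw [← Real.rpow_natCast r (μ + 1), hr, Real.sqrt_eq_rpow,
          ← Real.rpow_mul hNpos.le]
        rw [div_eq_mul_inv, div_eq_mul_inv, ← mul_assoc, ← mul_assoc,
          ← Real.rpow_add hNpos, ← Real.rpow_add hNpos]
        congr 2
        push_cast
        ring
      rw [← hval]
      exact hle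
    have htd := tendsto_pow_const_div_const_pow_of_one_lt 2 hr1
    obtain ⟨n, hn2, hn1⟩ :=
      ((htd.eventually_lt_const (by positivity : (0:ℝ) < 1 / (C + 1))).and
        (eventually_ge_atTop 1)).exists
    have hQn := hQ (n - 1)
    have hcast : ((n - 1 : ℕ) : ℝ) + 1 = (n : ℝ) := by
      have : (n - 1) + 1 = n := by omega
      exact_mod_cast congrArg (Nat.cast : ℕ → ℝ) this
    rw [show (n - 1) + 1 = n by omega, hcast] at hQn
    have hnpos : (0:ℝ) < (n : ℝ) := by exact_mod_cast (by omega : 0 < n)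
    have hrn : (0:ℝ) < r ^ n := pow_pos hrpos n
    rw [div_lt_div_iff₀ hrn (by positivity)] at hn2
    -- hn2 : (n:ℝ)^2 * (C+1) < 1 * r^n
    have : C + 1 ≤ C := by
      have h5 : (C + 1) * (n:ℝ)^2 < r ^ n := by nlinarith
      have h6 : C + 1 < r ^ n / (n:ℝ)^2 := by
        rw [lt_div_iff₀ (by positivity)]
        linarith
      linarith
    linarith
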